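/- Let $0<\alpha<1/2$, $0<\beta\le 1$ with $\min\{\beta,1-\alpha\}>\alpha$, and let $V:[t,t+\bar h]\to\mathbb{R}$ satisfy $V(t)=0$ and $|V(s)-V(\tau)|\le\tilde D|s-\tau|^{\gamma}$ with $\gamma=\min\{\beta,1-\alpha\}$. Suppose $g:[t,t+\bar h]\to\mathbb{R}$ is such that for all $t\le \tau\le s\le t+\bar h$, $\big|\int_\tau^s V(r)\,dg(r)\big|\le \Lambda\,\|V\|_{\alpha,1;[\tau,s]}$ for some constant $\Ambda\ge 0$ (as holds for the generalized Stieltjes integral with $\Lambda=\Lambda_\alpha(g)$). Then $\big|\int_t^s V(r)\,dg(r)\big|\le C(\alpha,\beta)\,\tilde D\,\Lambda\,(s-t)^{1+\min\{\beta-\alpha,\,1-2\alpha\}}$ for all $s\in[t,t+\bar h]$; in particular $\frac{1}{s-t}\int_t^s V(r)\,dg(r)\to 0$ as $s\downarrow t$. -/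

import Mathlib

open MeasureTheory intervalIntegral Filter Topology

theorem stmt_11 (α β : ℝ) (hα0 : 0 < α) (hα : α < 1/2)
    (hβ0 : 0 < β) (hβ1 : β ≤ 1) (hβα : α < min β (1 - α)) :
    ∃ C > (0:ℝ), ∀ (t hbar D Lam : ℝ) (V : ℝ → ℝ) (I : ℝ → ℝ → ℝ),
      0 < hbar → hbar ≤ 1 → 0 < D → 0 ≤ Lam →
      V t = 0 →
      (∀ s' τ', s' ∈ Set.Icc t (t + hbar) → τ' ∈ Set.Icc t (t + hbar) →
        |V s' - V τ'| ≤ D * |s' - τ'| ^ (min β (1 - α))) →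
      (∀ τ s, t ≤ τ → τ ≤ s → s ≤ t + hbar →
        |I τ s| ≤ Lam * ∫ r in τ..s, (|V r| / (r - τ) ^ α
          + ∫ y in τ..r, |V r - V y| / (r - y) ^ (α + 1))) →
      ((∀ s, t ≤ s → s ≤ t + hbar →
          |I t s| ≤ C * D * Lam * (s - t) ^ (1 + min (β - α) (1 - 2*α)))
        ∧ Tendsto (fun s => I t s / (s - t))
            (nhdsWithin t (Set.Ioi t)) (nhds 0)) := by
  set γ := min β (1 - α) with hγdef
  set c := γ - α with hcdef
  have hγα : α < γ := hβα
  have hc : 0 < c := by simp only [hcdef]; linarith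
  have hγ1 : γ ≤ 1 - α := min_le_right _ _
  have hc1 : c < 1 := by simp only [hcdef]; linarith
  have hmin : min (β - α) (1 - 2*α) = c := by
    simp only [hcdef, hγdef]
    rcases le_total β (1 - α) with h | h
    · rw [min_eq_left h, min_eq_left (by linarith)]
    · rw [min_eq_right h, min_eq_right (by linarith)]; ring
  refine ⟨1 + 1/c, by positivity, ?_⟩
  intro t hbar D Lam V I hh0 hh1 hD hLam hVt hHol hI
  -- continuity of u ↦ u ^ c
  have hcontc : Continuous fun u : ℝ => u ^ c := by
    rw [continuous_iff_continuousAt]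
    intro x
    exact Real.continuousAt_rpow_const x c (Or.inr hc.le)
  -- the key bound
  have key : ∀ s, t ≤ s → s ≤ t + hbar →
      |I t s| ≤ (1 + 1/c) * D * Lam * (s - t) ^ (1 + c) := by
    intro s hts hsh
    have h1 := hI t s le_rfl hts hsh
    -- integrability of the dominating function
    have hint_g : IntervalIntegrable (fun r => D * (1 + 1/c) * (r - t) ^ c) volume t s := by
      apply ContinuousOn.intervalIntegrable
      exact ((continuous_const.mul (hcontc.comp (continuous_sub_right t)))).continuousOn
    -- inner integral bound
    have inner_bound : ∀ r ∈ Set.Ioc t s,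
        (∫ y in t..r, |V r - V y| / (r - y) ^ (α + 1)) ≤ D * (r - t) ^ c / c := by
      intro r hr
      have htr : t ≤ r := hr.1.le
      have hrmem : r ∈ Set.Icc t (t + hbar) := ⟨htr, le_trans hr.2 hsh⟩
      have hir : IntervalIntegrable (fun y => (r - y) ^ (c - 1)) volume t r := by
        have h0 : IntervalIntegrable (fun x : ℝ => x ^ (c - 1)) volume 0 (r - t) :=
          intervalIntegral.intervalIntegrable_rpow' (by linarith)
        have h2 := (h0.comp_sub_left r).symm
        simpa using h2
      have hstep : (∫ y in t..r, |V r - V y| / (r - y) ^ (α + 1))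
          ≤ ∫ y in t..r, D * (r - y) ^ (c - 1) := by
        rw [intervalIntegral.integral_of_le htr, intervalIntegral.integral_of_le htr]
        apply MeasureTheory.integral_mono_of_nonneg
        · filter_upwards [ae_restrict_mem measurableSet_Ioc] with y hy
          have : (0:ℝ) ≤ r - y := by linarith [hy.2]
          positivity
        · exact (hir.const_mul D).1
        · filter_upwards [ae_restrict_mem measurableSet_Ioc] with y hy
          rcases eq_or_lt_of_le hy.2 with hyr | hyr
          · rw [hyr]
            simp [Real.zero_rpow (by linarith : c - 1 ≠ 0),
              Real.zero_rpow (by linarith : α + 1 ≠ 0)]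
          · have hry : 0 < r - y := by linarith
            have hymem : y ∈ Set.Icc t (t + hbar) := ⟨hy.1.le, by linarith [hr.2, hsh]⟩
            have hH := hHol r y hrmem hymem
            rw [abs_of_pos hry] at hH
            calc |V r - V y| / (r - y) ^ (α + 1)
                ≤ (D * (r - y) ^ γ) / (r - y) ^ (α + 1) := by
                  have hd : (0:ℝ) < (r - y) ^ (α + 1) := Real.rpow_pos_of_pos hry _
                  exact (div_le_div_iff_of_pos_right hd).mpr hH
              _ = D * (r - y) ^ (c - 1) := by
                  rw [mul_div_assoc, ← Real.rpow_sub hry]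
                  congr 1
                  simp only [hcdef]; ring
      have hval : (∫ y in t..r, D * (r - y) ^ (c - 1)) = D * (r - t) ^ c / c := by
        rw [intervalIntegral.integral_const_mul]
        rw [intervalIntegral.integral_comp_sub_left (fun x : ℝ => x ^ (c - 1)) r]
        rw [sub_self]
        rw [integral_rpow (Or.inl (by linarith : (-1:ℝ) < c - 1))]
        rw [show c - 1 + 1 = c by ring]
        rw [Real.zero_rpow (by linarith : c ≠ 0)]
        ring
      linarith [hstep, hval.le, hval.ge]
    -- outer bound
    have main : (∫ r in t..s, (|V r| / (r - t) ^ α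
          + ∫ y in t..r, |V r - V y| / (r - y) ^ (α + 1)))
        ≤ D * (1 + 1/c) * (s - t) ^ (1 + c) / (1 + c) := by
      have step : (∫ r in t..s, (|V r| / (r - t) ^ α
            + ∫ y in t..r, |V r - V y| / (r - y) ^ (α + 1)))
          ≤ ∫ r in t..s, D * (1 + 1/c) * (r - t) ^ c := by
        rw [intervalIntegral.integral_of_le hts, intervalIntegral.integral_of_le hts]
        apply MeasureTheory.integral_mono_of_nonneg
        · filter_upwards [ae_restrict_mem measurableSet_Ioc] with r hr
          have h1 : (0:ℝ) ≤ |V r| / (r - t) ^ α := by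
            have : (0:ℝ) ≤ r - t := by linarith [hr.1]
            positivity
          have h2 : (0:ℝ) ≤ ∫ y in t..r, |V r - V y| / (r - y) ^ (α + 1) := by
            apply intervalIntegral.integral_nonneg hr.1.le
            intro y hy
            have : (0:ℝ) ≤ r - y := by linarith [hy.2]
            positivity
          exact add_nonneg h1 h2
        · exact hint_g.1
        · filter_upwards [ae_restrict_mem measurableSet_Ioc] with r hr
          have hrt : 0 < r - t := by linarith [hr.1]
          have hrmem : r ∈ Set.Icc t (t + hbar) := ⟨hr.1.le, le_trans hr.2 hsh⟩
          have htmem : t ∈ Set.Icc t (t + hbar) := ⟨le_rfl, by linarith⟩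
          have hV : |V r| ≤ D * (r - t) ^ γ := by
            have hH := hHol r t hrmem htmem
            rw [hVt, sub_zero, abs_of_pos hrt] at hH
            exact hH
          have hfirst : |V r| / (r - t) ^ α ≤ D * (r - t) ^ c := by
            calc |V r| / (r - t) ^ α ≤ (D * (r - t) ^ γ) / (r - t) ^ α := by
                  have hd : (0:ℝ) < (r - t) ^ α := Real.rpow_pos_of_pos hrt _
                  exact (div_le_div_iff_of_pos_right hd).mpr hV
              _ = D * (r - t) ^ c := by
                  rw [mul_div_assoc, ← Real.rpow_sub hrt]
          have hsecond := inner_bound r hr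
          calc |V r| / (r - t) ^ α + (∫ y in t..r, |V r - V y| / (r - y) ^ (α + 1))
              ≤ D * (r - t) ^ c + D * (r - t) ^ c / c := add_le_add hfirst hsecond
            _ = D * (1 + 1/c) * (r - t) ^ c := by field_simp
      have hval : (∫ r in t..s, D * (1 + 1/c) * (r - t) ^ c)
          = D * (1 + 1/c) * (s - t) ^ (1 + c) / (1 + c) := by
        rw [intervalIntegral.integral_const_mul]
        rw [intervalIntegral.integral_comp_sub_right (fun x : ℝ => x ^ c) t]
        rw [sub_self]
        rw [integral_rpow (Or.inl (by linarith : (-1:ℝ) < c))]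
        rw [show c + 1 = 1 + c by ring]
        rw [Real.zero_rpow (by linarith : 1 + c ≠ 0)]
        ring
      linarith [step, hval.le]
    have hpow : (0:ℝ) ≤ (s - t) ^ (1 + c) := Real.rpow_nonneg (by linarith) _
    have h2 : Lam * (∫ r in t..s, (|V r| / (r - t) ^ α
          + ∫ y in t..r, |V r - V y| / (r - y) ^ (α + 1)))
        ≤ Lam * (D * (1 + 1/c) * (s - t) ^ (1 + c) / (1 + c)) :=
      mul_le_mul_of_nonneg_left main hLam
    have h3 : Lam * (D * (1 + 1/c) * (s - t) ^ (1 + c) / (1 + c))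
        ≤ (1 + 1/c) * D * Lam * (s - t) ^ (1 + c) := by
      have hA : (0:ℝ) ≤ D * (1 + 1/c) * (s - t) ^ (1 + c) := by positivity
      have hds := div_le_self hA (by linarith : (1:ℝ) ≤ 1 + c)
      calc Lam * (D * (1 + 1/c) * (s - t) ^ (1 + c) / (1 + c))
          ≤ Lam * (D * (1 + 1/c) * (s - t) ^ (1 + c)) := mul_le_mul_of_nonneg_left hds hLam
        _ = (1 + 1/c) * D * Lam * (s - t) ^ (1 + c) := by ring
    linarith [h1, h2, h3]
  refine ⟨fun s hs1 hs2 => by rw [hmin]; exact key s hs1 hs2, ?_⟩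
  apply squeeze_zero_norm'
  · filter_upwards [Ioo_mem_nhdsGT_of_mem (show t ∈ Set.Ico t (t + hbar) from ⟨le_rfl, by linarith⟩)] with s hs
    have hst : 0 < s - t := by linarith [hs.1]
    have hb := key s hs.1.le (le_of_lt hs.2)
    rw [Real.norm_eq_abs, abs_div, abs_of_pos hst, div_le_iff₀ hst]
    calc |I t s| ≤ (1 + 1/c) * D * Lam * (s - t) ^ (1 + c) := hb
      _ = (1 + 1/c) * D * Lam * (s - t) ^ c * (s - t) := by
          rw [show (1:ℝ) + c = c + 1 by ring, Real.rpow_add hst, Real.rpow_one]; ring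
  · have ha : Tendsto (fun s : ℝ => s - t) (𝓝[>] t) (𝓝 0) := by
      have h0 : Tendsto (fun s : ℝ => s - t) (𝓝 t) (𝓝 (t - t)) :=
        (continuous_id.sub continuous_const).tendsto t
      rw [sub_self] at h0
      exact h0.mono_left nhdsWithin_le_nhds
    have hb : Tendsto (fun u : ℝ => u ^ c) (𝓝 (0:ℝ)) (𝓝 0) := by
      have := (Real.continuousAt_rpow_const 0 c (Or.inr hc.le)).tendsto
      simpa [Real.zero_rpow hc.ne'] using this
    have := (hb.comp ha).const_mul ((1 + 1/c) * D * Lam)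
    simpa [Function.comp] using this
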